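/- For every finite nonnegative Borel measure μ on ℝ^n with finite moments up to degree s, there exists a quadrature rule of strength s with at most binom(n+s, s) nodes: finitely many points x_1,…,x_N ∈ supp(μ), N ≤ binom(n+s,s), and weights ω_i > 0 such that ∫ p dμ = ∑ ω_i p(x_i) for all polynomials p of total degree at most s. -/

import Mathlib

open MeasureTheory Set

abbrev tchakaIdx (n s : ℕ) : Type := {m : Fin n →₀ ℕ // (m.sum fun _ e => e) ≤ s}

noncomputable def tchakaF (n s : ℕ) (m : {m : Fin n →₀ ℕ // (m.sum fun _ e => e) ≤ s}) :
    Sym (Fin (n + 1)) s :=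
  ⟨Finsupp.toMultiset
      (Finsupp.embDomain Fin.castSuccEmb m.1 +
        Finsupp.single (Fin.last n) (s - m.1.sum fun _ e => e)), by
    rw [map_add, Multiset.card_add, Finsupp.card_toMultiset, Finsupp.card_toMultiset,
      Finsupp.sum_embDomain, Finsupp.sum_single_index rfl]
    have := m.2
    simp only [Function.id_def] at *
    omega⟩

theorem tchakaF_inj (n s : ℕ) : Function.Injective (tchakaF n s) := by
  intro m₁ m₂ h
  have hinj : Function.Injective (Finsupp.toMultiset (α := Fin (n + 1))) := by
    intro a b hab
    classical
    rw [← Finsupp.toMultiset_toFinsupp a, ← Finsupp.toMultiset_toFinsupp b, hab]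
  have h' : Finsupp.embDomain Fin.castSuccEmb m₁.1 +
        Finsupp.single (Fin.last n) (s - m₁.1.sum fun _ e => e) =
      Finsupp.embDomain Fin.castSuccEmb m₂.1 +
        Finsupp.single (Fin.last n) (s - m₂.1.sum fun _ e => e) := by
    have := congrArg Subtype.val h
    simp only [tchakaF] at this
    exact hinj this
  ext i
  have h2 := congrArg (fun f => f (Fin.castSuccEmb i)) h'
  have hne : Fin.last n ≠ Fin.castSuccEmb i := by
    simpa using (Fin.castSucc_lt_last i).ne'
  simpa only [Finsupp.add_apply, Finsupp.embDomain_apply_self,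
    Finsupp.single_eq_of_ne' hne, add_zero] using h2

instance tchakaIdx_finite (n s : ℕ) : Finite (tchakaIdx n s) :=
  Finite.of_injective _ (tchakaF_inj n s)

noncomputable instance tchakaIdx_fintype (n s : ℕ) : Fintype (tchakaIdx n s) :=
  Fintype.ofFinite _

theorem tchaka_card (n s : ℕ) : Fintype.card (tchakaIdx n s) ≤ (n + s).choose s := by
  classical
  have := Fintype.card_le_of_injective _ (tchakaF_inj n s)
  calc Fintype.card (tchakaIdx n s)
      ≤ Fintype.card (Sym (Fin (n + 1)) s) := this
    _ = (n + s).choose s := by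
        rw [Sym.card_sym_eq_choose]
        simp


/-- The support of a Borel measure: points all of whose open neighbourhoods have
positive measure. -/
def measureSupport {α : Type*} [TopologicalSpace α] [MeasurableSpace α]
    (μ : Measure α) : Set α :=
  {x | ∀ U : Set α, IsOpen U → x ∈ U → 0 < μ U}

theorem measure_compl_measureSupport {α : Type*} [TopologicalSpace α] [MeasurableSpace α]
    [SecondCountableTopology α] (μ : Measure α) :
    μ (measureSupport μ)ᶜ = 0 := by
  set S : Set (Set α) := {U | IsOpen U ∧ μ U = 0} with hSdef
  obtain ⟨T, hTc, hTS, hTu⟩ := TopologicalSpace.isOpen_sUnion_countable S (fun s hs => hs.1)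
  have hsub : (measureSupport μ)ᶜ ⊆ ⋃₀ T := by
    intro x hx
    simp only [mem_compl_iff, measureSupport, mem_setOf_eq, not_forall] at hx
    obtain ⟨U, hU, hxU, hμU⟩ := hx
    have : μ U = 0 := by simpa using hμU
    rw [hTu]
    exact ⟨U, ⟨hU, this⟩, hxU⟩
  refine measure_mono_null hsub ?_
  exact (measure_sUnion_null_iff hTc).2 fun s hs => (hTS hs).2

theorem measureSupport_nonempty {α : Type*} [TopologicalSpace α] [MeasurableSpace α]
    [SecondCountableTopology α] (μ : Measure α) (hμ : μ ≠ 0) :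
    (measureSupport μ).Nonempty := by
  by_contra h
  rw [not_nonempty_iff_eq_empty] at h
  apply hμ
  ext t ht
  refine le_antisymm ?_ zero_le
  calc μ t ≤ μ (measureSupport μ)ᶜ := measure_mono (by rw [h]; simp)
    _ = 0 := measure_compl_measureSupport μ

theorem eval_zero_on_support {α : Type*} [TopologicalSpace α] [MeasurableSpace α]
    [SecondCountableTopology α] [OpensMeasurableSpace α]
    (μ : Measure α) (g : α → ℝ) (hg : Continuous g) (hgi : Integrable g μ)
    (hpos : ∀ x ∈ measureSupport μ, 0 ≤ g x) (hint : ∫ x, g x ∂μ ≤ 0) :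
    ∀ x ∈ measureSupport μ, g x = 0 := by
  have h0 : 0 ≤ᵐ[μ] g := by
    have hmem : (measureSupport μ) ∈ ae μ := by
      rw [mem_ae_iff]; exact measure_compl_measureSupport μ
    exact Filter.eventually_of_mem hmem hpos
  have hI : ∫ x, g x ∂μ = 0 := le_antisymm hint (integral_nonneg_of_ae h0)
  have hz : g =ᵐ[μ] 0 := by
    have := (integral_eq_zero_iff_of_nonneg_ae h0 hgi).1 hI
    simpa using this
  have hnull : μ {x | g x ≠ 0} = 0 := by
    have := hz
    rw [Filter.EventuallyEq, ae_iff] at this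
    simpa using this
  intro x hx
  by_contra hgx
  have hgx' : 0 < g x := lt_of_le_of_ne (hpos x hx) (Ne.symm hgx)
  have hU : IsOpen (g ⁻¹' Set.Ioi 0) := isOpen_Ioi.preimage hg
  have := hx _ hU hgx'
  have hle : μ (g ⁻¹' Set.Ioi 0) ≤ μ {x | g x ≠ 0} :=
    measure_mono fun y hy => ne_of_gt hy
  rw [hnull] at hle
  exact absurd (le_antisymm hle zero_le) (ne_of_gt this)


theorem tchaka_core {E : Type*} [NormedAddCommGroup E] [NormedSpace ℝ E]
    [FiniteDimensional ℝ E] (A : Set E) (c : E)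
    (hc : c ∈ closure (convexHull ℝ A))
    (H : ∀ ψ : E →L[ℝ] ℝ, (∀ a ∈ A, ψ c ≤ ψ a) → ∀ a ∈ A, ψ a = ψ c) :
    c ∈ convexHull ℝ A := by
  classical
  -- A is nonempty
  rcases A.eq_empty_or_nonempty with rfl | hAne
  · simp at hc
  -- translate so that `c` becomes `0`
  set A' : Set E := (fun x => x - c) '' A with hA'def
  have himg : ∀ s : Set E, (fun x => x - c) '' (convexHull ℝ s) = convexHull ℝ ((fun x => x - c) '' s) := by
    intro s
    have := (AffineEquiv.constVAdd ℝ E (-c)).toAffineMap.image_convexHull s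
    simpa [sub_eq_neg_add, AffineEquiv.coe_toAffineMap, funext_iff] using this
  have h0cl : (0 : E) ∈ closure (convexHull ℝ A') := by
    have hmap : (fun x => x - c) '' closure (convexHull ℝ A) ⊆ closure (convexHull ℝ A') := by
      rw [← himg]
      exact (image_closure_subset_closure_image (by continuity))
    have : (0 : E) ∈ (fun x => x - c) '' closure (convexHull ℝ A) :=
      ⟨c, hc, by simp⟩
    exact hmap this
  have H' : ∀ ψ : E →L[ℝ] ℝ, (∀ v ∈ A', 0 ≤ ψ v) → ∀ v ∈ A', ψ v = 0 := by
    intro ψ hψ v hv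
    obtain ⟨a, ha, rfl⟩ := hv
    have h1 : ∀ b ∈ A, ψ c ≤ ψ b := by
      intro b hb
      have := hψ (b - c) ⟨b, hb, rfl⟩
      rw [map_sub] at this
      linarith
    have := H ψ h1 a ha
    rw [map_sub]
    linarith
  suffices h0 : (0 : E) ∈ convexHull ℝ A' by
    rw [← himg] at h0
    obtain ⟨a, haH, ha0⟩ := h0
    have : a = c := by
      have := sub_eq_zero.mp ha0; exact this
    rwa [this] at haH
  -- pass to the span of A'
  set W : Submodule ℝ E := Submodule.span ℝ A' with hWdef
  have hA'W : A' ⊆ (W : Set E) := Submodule.subset_span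
  set A'' : Set W := Subtype.val ⁻¹' A' with hA''def
  have hval : Subtype.val '' A'' = A' := by
    rw [hA''def, Set.image_preimage_eq_inter_range, Subtype.range_coe]
    exact Set.inter_eq_self_of_subset_left hA'W
  have hHull : Subtype.val '' (convexHull ℝ A'') = convexHull ℝ A' := by
    have := W.subtype.image_convexHull A''
    rw [Submodule.coe_subtype] at this
    rw [this, hval]
  have h0'' : (0 : W) ∈ closure (convexHull ℝ A'') := by
    rw [closure_subtype, hHull]
    exact h0cl
  set K : Set W := convexHull ℝ A'' with hKdef
  have hKconv : Convex ℝ K := convex_convexHull ℝ A''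
  have hAne'' : A''.Nonempty := by
    obtain ⟨a, ha⟩ := hAne
    exact ⟨⟨a - c, hA'W ⟨a, ha, rfl⟩⟩, ⟨a, ha, rfl⟩⟩
  have hspan'' : Submodule.span ℝ A'' = ⊤ := by
    apply Submodule.map_injective_of_injective (Submodule.injective_subtype W)
    rw [Submodule.map_span, Submodule.coe_subtype, hval, Submodule.map_subtype_top]
  have h0aff : (0 : W) ∈ affineSpan ℝ A'' := by
    have hcl : IsClosed ((affineSpan ℝ A'' : AffineSubspace ℝ W) : Set W) :=
      AffineSubspace.closed_of_finiteDimensional _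
    exact closure_minimal (convexHull_subset_affineSpan A'') hcl h0''
  have haff : affineSpan ℝ A'' = ⊤ := by
    have hne : ((affineSpan ℝ A'' : AffineSubspace ℝ W) : Set W).Nonempty := by
      obtain ⟨v, hv⟩ := hAne''
      exact ⟨v, subset_affineSpan ℝ A'' hv⟩
    rw [← AffineSubspace.direction_eq_top_iff_of_nonempty hne]
    rw [eq_top_iff, ← hspan'', Submodule.span_le]
    intro v hv
    have := AffineSubspace.vsub_mem_direction (subset_affineSpan ℝ A'' hv) h0aff
    simpa using this
  have hintne : (interior K).Nonempty := by
    rw [hKconv.interior_nonempty_iff_affineSpan_eq_top, affineSpan_convexHull]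
    exact haff
  by_cases h0K : (0 : W) ∈ K
  · rw [← hHull]
    exact ⟨0, h0K, rfl⟩
  exfalso
  have h0int : (0 : W) ∉ interior K := fun h => h0K (interior_subset h)
  obtain ⟨f, hf⟩ := geometric_hahn_banach_open_point hKconv.interior isOpen_interior h0int
  have hf0 : ∀ y ∈ interior K, f y < 0 := by
    intro y hy
    have := hf y hy
    simpa using this
  obtain ⟨y0, hy0⟩ := hintne
  have hfy0 : f y0 < 0 := hf0 _ hy0
  have hKle : ∀ a ∈ K, f a ≤ 0 := by
    intro a ha
    by_contra hfa
    push_neg at hfa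
    have hden : 0 < f a - f y0 := by linarith
    set t : ℝ := f a / (f a - f y0) with htdef
    have ht0 : 0 < t := div_pos hfa hden
    have ht1 : t ≤ 1 := le_of_lt ((div_lt_one hden).2 (by linarith))
    have hmem : t • y0 + (1 - t) • a ∈ interior K :=
      hKconv.combo_interior_closure_mem_interior hy0 (subset_closure ha) ht0
        (by linarith) (by ring)
    have hlt := hf0 _ hmem
    rw [map_add, _root_.map_smul, _root_.map_smul] at hlt
    have hzero : t * f y0 + (1 - t) * f a = 0 := by
      rw [htdef]
      field_simp
      ring
    simp only [smul_eq_mul] at hlt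
    linarith
  obtain ⟨ψ, hψ, -⟩ := exists_extension_norm_eq W (-f)
  have hψA' : ∀ v ∈ A', 0 ≤ ψ v := by
    intro v hv
    have hvW : v ∈ W := hA'W hv
    have h1 : ψ v = -f ⟨v, hvW⟩ := by
      have := hψ ⟨v, hvW⟩
      simpa using this
    have h2 : f ⟨v, hvW⟩ ≤ 0 := hKle _ (subset_convexHull ℝ A'' hv)
    rw [h1]; linarith
  have hzeroA' := H' ψ hψA'
  have hfA'' : ∀ v : W, v ∈ A'' → f v = 0 := by
    intro v hv
    have h1 : ψ v.1 = -f v := by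
      have := hψ v
      simpa using this
    have h2 : ψ v.1 = 0 := hzeroA' v.1 hv
    rw [h1] at h2
    linarith
  have hftop : ∀ v : W, f v = 0 := by
    intro v
    have hv : v ∈ Submodule.span ℝ A'' := by rw [hspan'']; trivial
    induction hv using Submodule.span_induction with
    | mem x hx => exact hfA'' x hx
    | zero => exact map_zero f
    | add x y _ _ hx hy => rw [map_add, hx, hy, add_zero]
    | smul r x _ hx => rw [_root_.map_smul, hx, smul_zero]
  exact absurd (hftop y0) (ne_of_lt hfy0)

/-- Richter–Tchakaloff with the Carathéodory bound: every finite measure on `ℝⁿ` with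
finite moments up to degree `s` admits a quadrature rule of strength `s`, with nodes
in the support and at most `binom(n+s,s)` of them. -/
theorem stmt13 (n s : ℕ) (μ : Measure (Fin n → ℝ)) [IsFiniteMeasure μ]
    (hmom : ∀ p : MvPolynomial (Fin n) ℝ, p.totalDegree ≤ s →
      Integrable (fun x => MvPolynomial.eval x p) μ) :
    ∃ (N : ℕ) (x : Fin N → (Fin n → ℝ)) (ω : Fin N → ℝ),
      N ≤ Nat.choose (n + s) s ∧
      (∀ i, x i ∈ measureSupport μ) ∧
      (∀ i, 0 < ω i) ∧
      ∀ p : MvPolynomial (Fin n) ℝ, p.totalDegree ≤ s →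
        ∫ y, MvPolynomial.eval y p ∂μ = ∑ i, ω i * MvPolynomial.eval (x i) p := by
  classical
  by_cases hμ0 : μ = 0
  · refine ⟨0, Fin.elim0, Fin.elim0, Nat.zero_le _, (fun i => i.elim0), (fun i => i.elim0), ?_⟩
    intro p hp
    subst hμ0
    simp
  haveI : NeZero μ := ⟨hμ0⟩
  set T : (Fin n → ℝ) → ((tchakaIdx n s) → ℝ) :=
    fun x m => MvPolynomial.eval x (MvPolynomial.monomial m.1 (1 : ℝ)) with hTdef
  have hdegm : ∀ m : (tchakaIdx n s), (MvPolynomial.monomial m.1 (1 : ℝ)).totalDegree ≤ s := fun m =>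
    le_trans (MvPolynomial.totalDegree_monomial_le _ _) m.2
  have hmono : ∀ m : (tchakaIdx n s), Integrable (fun x => T x m) μ := fun m => hmom _ (hdegm m)
  have hTi : Integrable T μ := by
    have hT : T = fun x => ∑ m : (tchakaIdx n s), (T x m) • (fun j => if m = j then (1 : ℝ) else 0) := by
      funext x
      exact pi_eq_sum_univ (T x)
    rw [hT]
    exact integrable_finset_sum _ fun m _ => (hmono m).smul_const _
  set b : (tchakaIdx n s) → ℝ := ∫ x, T x ∂μ with hbdef
  have hb : ∀ m : (tchakaIdx n s), b m = ∫ x, T x m ∂μ := by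
    intro m
    have := (ContinuousLinearMap.proj (R := ℝ) (φ := fun _ : (tchakaIdx n s) => ℝ) m).integral_comp_comm hTi
    simpa [hbdef] using this.symm
  set mass : ℝ := (μ Set.univ).toReal with hmassdef
  have hmass : 0 < mass :=
    ENNReal.toReal_pos (by simpa using hμ0) (measure_ne_top μ _)
  set c : (tchakaIdx n s) → ℝ := ⨍ x, T x ∂μ with hcdef
  have hcb : b = mass • c := by
    rw [hcdef, average_eq, smul_smul, show mass * (μ.real univ)⁻¹ = 1 from mul_inv_cancel₀ (ne_of_gt hmass), one_smul]
  set A : Set ((tchakaIdx n s) → ℝ) := T '' (measureSupport μ) with hAdef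
  -- bridge between linear functionals on `(tchakaIdx n s) → ℝ` and polynomials
  have hbridge : ∀ ψ : ((tchakaIdx n s) → ℝ) →L[ℝ] ℝ, ∃ p : MvPolynomial (Fin n) ℝ,
      p.totalDegree ≤ s ∧ (∀ x, MvPolynomial.eval x p = ψ (T x)) := by
    intro ψ
    refine ⟨∑ m : (tchakaIdx n s), MvPolynomial.monomial m.1 (ψ (fun j => if m = j then 1 else 0)), ?_, ?_⟩
    · refine le_trans (MvPolynomial.totalDegree_finset_sum _ _) (Finset.sup_le fun m _ => ?_)
      exact le_trans (MvPolynomial.totalDegree_monomial_le _ _) m.2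
    · intro x
      rw [map_sum]
      conv_rhs => rw [pi_eq_sum_univ (T x), map_sum]
      refine Finset.sum_congr rfl fun m _ => ?_
      rw [_root_.map_smul, MvPolynomial.eval_monomial]
      simp only [hTdef, MvPolynomial.eval_monomial, one_mul, smul_eq_mul]
      ring
  have hcardι : Fintype.card (tchakaIdx n s) ≤ (n + s).choose s := tchaka_card n s
  have hψb : ∀ ψ : ((tchakaIdx n s) → ℝ) →L[ℝ] ℝ, ∫ x, ψ (T x) ∂μ = ψ b :=
    fun ψ => ψ.integral_comp_comm hTi
  -- membership of the average in the closed convex hull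
  have hc : c ∈ closure (convexHull ℝ A) := by
    refine Convex.average_mem ((convex_convexHull ℝ A).closure) isClosed_closure ?_ hTi
    have hmem : (measureSupport μ) ∈ ae μ := by
      rw [mem_ae_iff]; exact measure_compl_measureSupport μ
    exact Filter.eventually_of_mem hmem fun x hx =>
      subset_closure (subset_convexHull ℝ A ⟨x, hx, rfl⟩)
  -- the key hypothesis for the geometric core lemma
  have H : ∀ ψ : ((tchakaIdx n s) → ℝ) →L[ℝ] ℝ, (∀ a ∈ A, ψ c ≤ ψ a) → ∀ a ∈ A, ψ a = ψ c := by
    intro ψ hψ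
    obtain ⟨p, hpdeg, hpev⟩ := hbridge ψ
    set q : MvPolynomial (Fin n) ℝ := p - MvPolynomial.C (ψ c) with hqdef
    have hqdeg : q.totalDegree ≤ s := by
      rw [hqdef, sub_eq_add_neg, ← map_neg]
      refine le_trans (MvPolynomial.totalDegree_add _ _) (max_le hpdeg ?_)
      simp [MvPolynomial.totalDegree_C]
    have hqev : ∀ x, MvPolynomial.eval x q = ψ (T x) - ψ c := by
      intro x
      rw [hqdef, map_sub, hpev, MvPolynomial.eval_C]
    have hqint : Integrable (fun x => MvPolynomial.eval x q) μ := hmom q hqdeg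
    have hqpos : ∀ x ∈ measureSupport μ, 0 ≤ MvPolynomial.eval x q := by
      intro x hx
      rw [hqev]
      have := hψ (T x) ⟨x, hx, rfl⟩
      linarith
    have hqz : ∫ x, MvPolynomial.eval x q ∂μ = 0 := by
      have h1 : ∫ x, MvPolynomial.eval x q ∂μ
          = ∫ x, ψ (T x) ∂μ - ∫ _x, ψ c ∂μ := by
        simp_rw [hqev]
        exact integral_sub (by simpa [funext hpev] using hmom p hpdeg) (integrable_const _)
      rw [h1, hψb ψ, integral_const, hcb, _root_.map_smul]
      simp [hmassdef, smul_eq_mul]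
      exact sub_self _
    have hz := eval_zero_on_support μ (fun x => MvPolynomial.eval x q)
      (MvPolynomial.continuous_eval q) hqint hqpos (le_of_eq hqz)
    rintro a ⟨x, hx, rfl⟩
    have h2 : ψ (T x) - ψ c = 0 := by rw [← hqev x]; exact hz x hx
    linarith
  have hcA : c ∈ convexHull ℝ A := tchaka_core A c hc H
  -- Carathéodory
  obtain ⟨ι', hι', z, w, hrange, hai, hwpos, hwsum, hwz⟩ :=
    eq_pos_convex_span_of_mem_convexHull hcA
  letI := hι'
  have hwz' : ∑ i : ι', w i • z i = c := hwz
  set N := Fintype.card ι' with hNdef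
  set e : Fin N ≃ ι' := (Fintype.equivFin ι').symm with hedef
  have hzA : ∀ j : ι', ∃ y, y ∈ measureSupport μ ∧ T y = z j := by
    intro j
    obtain ⟨y, hy, hTy⟩ := hrange (Set.mem_range_self j)
    exact ⟨y, hy, hTy⟩
  choose y hy hTy using hzA
  refine ⟨N, fun i => y (e i), fun i => mass * w (e i), ?_, fun i => hy (e i),
    fun i => mul_pos hmass (hwpos (e i)), ?_⟩
  · -- cardinality bound
    have hcard1 : 1 ≤ Fintype.card (tchakaIdx n s) := by
      exact Fintype.card_pos_iff.mpr ⟨⟨0, by simp⟩⟩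
    rcases Nat.eq_zero_or_pos N with h0 | hpos
    · omega
    obtain ⟨k, hk⟩ := Nat.exists_eq_add_of_lt hpos
    have hk' : N = k + 1 := by omega
    have hfr : Module.finrank ℝ (vectorSpan ℝ (Set.range z)) = k :=
      hai.finrank_vectorSpan (by rw [← hNdef, hk'])
    set m0 : (tchakaIdx n s) := ⟨0, by simp⟩ with hm0def
    have hz1 : ∀ j : ι', z j m0 = 1 := by
      intro j
      rw [← hTy j]
      simp [hTdef, MvPolynomial.eval_monomial, hm0def]
    set φ0 : ((tchakaIdx n s) → ℝ) →ₗ[ℝ] ℝ := LinearMap.proj m0 with hφ0def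
    have hker : vectorSpan ℝ (Set.range z) ≤ LinearMap.ker φ0 := by
      rw [vectorSpan_def, Submodule.span_le]
      rintro v ⟨v1, hv1, v2, hv2, rfl⟩
      obtain ⟨j1, rfl⟩ := hv1
      obtain ⟨j2, rfl⟩ := hv2
      simp [hφ0def, LinearMap.mem_ker, hz1]
    have hrange0 : LinearMap.range φ0 = ⊤ := by
      rw [LinearMap.range_eq_top]
      intro r
      exact ⟨Pi.single m0 r, by simp [hφ0def]⟩
    have hrank := φ0.finrank_range_add_finrank_ker
    rw [hrange0, finrank_top, Module.finrank_self,
      Module.finrank_fintype_fun_eq_card] at hrank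
    have hle : k ≤ Module.finrank ℝ (LinearMap.ker φ0) := by
      rw [← hfr]
      exact Submodule.finrank_mono hker
    omega
  · -- the quadrature identity
    intro p hp
    have hrepr : b = ∑ i : Fin N, (mass * w (e i)) • T (y (e i)) := by
      calc b = mass • c := hcb
        _ = mass • ∑ j : ι', w j • z j := by rw [hwz']
        _ = ∑ j : ι', (mass * w j) • z j := by
            rw [Finset.smul_sum]
            exact Finset.sum_congr rfl fun j _ => smul_smul _ _ _
        _ = ∑ i : Fin N, (mass * w (e i)) • z (e i) := (Equiv.sum_comp e _).symm
        _ = ∑ i : Fin N, (mass * w (e i)) • T (y (e i)) :=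
            Finset.sum_congr rfl fun i _ => by rw [hTy]
    -- decomposition of p over monomials of degree ≤ s
    have hsupp : ∀ m ∈ p.support, (m.sum fun _ e => e) ≤ s := fun m hm =>
      le_trans (MvPolynomial.le_totalDegree hm) hp
    set Fs : Finset (Fin n →₀ ℕ) := Finset.univ.image (Subtype.val : (tchakaIdx n s) → _) with hFsdef
    have hFsmem : ∀ m : Fin n →₀ ℕ, m ∈ Fs ↔ (m.sum fun _ e => e) ≤ s := by
      intro m
      simp [hFsdef, Subtype.exists]
    have hpdecomp : p = ∑ m : (tchakaIdx n s), MvPolynomial.monomial m.1 (p.coeff m.1) := by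
      rw [← Finset.sum_subtype Fs hFsmem (fun m => MvPolynomial.monomial m (p.coeff m))]
      conv_lhs => rw [MvPolynomial.as_sum p]
      refine Finset.sum_subset (fun m hm => (hFsmem m).2 (hsupp m hm)) ?_
      intro m _ hm
      rw [MvPolynomial.notMem_support_iff.1 hm, map_zero]
    have hevalp : ∀ v : Fin n → ℝ, MvPolynomial.eval v p = ∑ m : (tchakaIdx n s), p.coeff m.1 * T v m := by
      intro v
      conv_lhs => rw [hpdecomp]
      rw [map_sum]
      refine Finset.sum_congr rfl fun m _ => ?_
      simp [hTdef, MvPolynomial.eval_monomial]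
    have hintp : ∫ v, MvPolynomial.eval v p ∂μ = ∑ m : (tchakaIdx n s), p.coeff m.1 * b m := by
      simp_rw [hevalp]
      rw [integral_finset_sum _ fun m _ => (hmono m).const_mul _]
      exact Finset.sum_congr rfl fun m _ => by rw [integral_const_mul, hb]
    rw [hintp]
    have hbm : ∀ m : (tchakaIdx n s), b m = ∑ i : Fin N, (mass * w (e i)) * T (y (e i)) m := by
      intro m
      rw [hrepr]
      simp [Finset.sum_apply]
    calc ∑ m : (tchakaIdx n s), p.coeff m.1 * b m
        = ∑ m : (tchakaIdx n s), ∑ i : Fin N, p.coeff m.1 * ((mass * w (e i)) * T (y (e i)) m) := by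
          refine Finset.sum_congr rfl fun m _ => ?_
          rw [hbm, Finset.mul_sum]
      _ = ∑ i : Fin N, ∑ m : (tchakaIdx n s), p.coeff m.1 * ((mass * w (e i)) * T (y (e i)) m) :=
          Finset.sum_comm
      _ = ∑ i : Fin N, mass * w (e i) * MvPolynomial.eval (y (e i)) p := by
          refine Finset.sum_congr rfl fun i _ => ?_
          rw [hevalp, Finset.mul_sum]
          refine Finset.sum_congr rfl fun m _ => by ring
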